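/- Let d ≥ 1, ℓ ∈ ℝ, let B ⊆ ℝ^d be compact, let g, p : B → ℝ and θ : B → [0,1] be continuous, set p̄ := θ·p, and let N ⊆ B be a set with p̄(x) = p(x) for every x ∈ B ∖ N. Assume {g = ℓ} ∩ B has at most finitely many connected components. Let H, H̄ : B × [0,1] → B be continuous maps such that for each t ∈ [0,1], H(·,t) and H̄(·,t) are homeomorphisms of B onto B, H(·,0) and H̄(·,0) are the identity on B, H({g = ℓ} ∩ B, t) = {g + tp = ℓ} ∩ B and H̄({g = ℓ} ∩ B, t) = {g + t·p̄ = ℓ} ∩ B for every t ∈ [0,1]. Then for every connected component L of {g = ℓ} ∩ B, one has H̄(L,1) ∖ N = H(L,1) ∖ N. -/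

import Mathlib

open MeasureTheory Filter Set Topology Metric
open scoped ENNReal NNReal

noncomputable section

/-- `ℝ^d` as Euclidean space. -/
abbrev Euc (d : ℕ) := EuclideanSpace ℝ (Fin d)

/-- The closed unit cube `B_v = v + [0,1]^d`. -/
def unitCube (d : ℕ) (v : Fin d → ℤ) : Set (Euc d) :=
  {x | ∀ i, (v i : ℝ) ≤ x i ∧ x i ≤ (v i : ℝ) + 1}

/-- The open face of the cube `B_v` described by `s`: `some false ↦ {v i}`,
`some true ↦ {v i + 1}`, `none ↦ (v i, v i + 1)`. -/
def openFace (d : ℕ) (v : Fin d → ℤ) (s : Fin d → Option Bool) : Set (Euc d) :=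
  {x | ∀ i, match s i with
    | some false => x i = (v i : ℝ)
    | some true => x i = (v i : ℝ) + 1
    | none => (v i : ℝ) < x i ∧ x i < (v i : ℝ) + 1}

/-- `x` is a stratified critical point of `h` in the cube `B_v` at level `ℓ`. -/
def IsStratCrit (d : ℕ) (h : Euc d → ℝ) (v : Fin d → ℤ) (ℓ : ℝ) (x : Euc d) : Prop :=
  ∃ s : Fin d → Option Bool, x ∈ openFace d v s ∧ h x = ℓ ∧
    ∀ i, s i = none → fderiv ℝ h x (EuclideanSpace.single i 1) = 0

/-- `(g,p)` is locally topologically stable on `B_v` at level `ℓ`. -/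
def LocStable (d : ℕ) (g p : Euc d → ℝ) (v : Fin d → ℤ) (ℓ : ℝ) : Prop :=
  ∀ t ∈ Set.Icc (0:ℝ) 1, ∀ x : Euc d, ¬ IsStratCrit d (fun y => g y + t * p y) v ℓ x

/-- Union of the unbounded connected components of `A`. -/
def unboundedPart (d : ℕ) (A : Set (Euc d)) : Set (Euc d) :=
  {x | x ∈ A ∧ ¬ Bornology.IsBounded (connectedComponentIn A x)}

/-- Union of the bounded connected components of `A`. -/
def boundedPart (d : ℕ) (A : Set (Euc d)) : Set (Euc d) :=
  A \ unboundedPart d A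

/-- The locally unstable set `U_Loc(g,p)` at level `ℓ`. -/
def ULoc (d : ℕ) (g p : Euc d → ℝ) (ℓ : ℝ) : Set (Fin d → ℤ) :=
  {w | ¬ LocStable d g p w ℓ}

/-- The finite-range unstable set `U_FR(g,p)` at level `ℓ`. -/
def UFR (d : ℕ) (g p : Euc d → ℝ) (ℓ : ℝ) : Set (Fin d → ℤ) :=
  ULoc d g p ℓ ∪
    {w | ∃ u ∈ ULoc d g p ℓ,
      (∃ x ∈ unitCube d w, ∃ y ∈ unitCube d u,
        JoinedIn (boundedPart d {z | ℓ ≤ g z}) x y) ∨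
      (∃ x ∈ unitCube d w, ∃ y ∈ unitCube d u,
        JoinedIn (boundedPart d {z | ℓ ≤ g z + p z}) x y)}

/-- `A` has at most finitely many connected components. -/
def FinitelyManyComponents (d : ℕ) (A : Set (Euc d)) : Prop :=
  {C : Set (Euc d) | ∃ x ∈ A, C = connectedComponentIn A x}.Finite

/-- `H` is a stratified isotopy of the union `D` of the cubes `B_{v i}`:
it is continuous on `D × [0,1]`, each time slice is a homeomorphism of `D`
onto itself, and each stratum (open face) is preserved at every time. -/
def IsStratIsotopy (d n : ℕ) (v : Fin n → Fin d → ℤ) (H : Euc d → ℝ → Euc d) : Prop :=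
  ContinuousOn (fun q : Euc d × ℝ => H q.1 q.2) ((⋃ i, unitCube d (v i)) ×ˢ Set.Icc 0 1) ∧
  (∀ t ∈ Set.Icc (0:ℝ) 1,
    ∃ e : (⋃ i, unitCube d (v i)) ≃ₜ (⋃ i, unitCube d (v i)),
      ∀ x : (⋃ i, unitCube d (v i)), (e x : Euc d) = H x t) ∧
  (∀ t ∈ Set.Icc (0:ℝ) 1, ∀ i : Fin n, ∀ s : Fin d → Option Bool,
    (fun x => H x t) '' openFace d (v i) s = openFace d (v i) s)

/-- The cube `Λ_r = [-r,r]^d`. -/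
def bigCube (d : ℕ) (r : ℝ) : Set (Euc d) :=
  {x | ∀ i, |x i| ≤ r}

lemma exists_isotopy_inverse (d : ℕ) (B : Set (Euc d)) (hB : IsCompact B)
    (H : Euc d → ℝ → Euc d)
    (Hcont : ContinuousOn (fun q : Euc d × ℝ => H q.1 q.2) (B ×ˢ Set.Icc 0 1))
    (Hhomeo : ∀ t ∈ Set.Icc (0:ℝ) 1, ∃ e : B ≃ₜ B, ∀ x : B, (e x : Euc d) = H x t) :
    ∃ F : Euc d × ℝ → Euc d, ContinuousOn F (B ×ˢ Set.Icc 0 1) ∧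
      ∀ q ∈ B ×ˢ Set.Icc (0:ℝ) 1, F q ∈ B ∧ H (F q) q.2 = q.1 := by
  classical
  set K : Set (Euc d × ℝ) := B ×ˢ Set.Icc 0 1 with hK
  have hKc : IsCompact K := hB.prod isCompact_Icc
  haveI : CompactSpace K := isCompact_iff_compactSpace.mp hKc
  have hmemB : ∀ t ∈ Set.Icc (0:ℝ) 1, ∀ x ∈ B, H x t ∈ B := by
    intro t ht x hx
    obtain ⟨e, he⟩ := Hhomeo t ht
    rw [← he ⟨x, hx⟩]; exact (e ⟨x, hx⟩).2
  -- the map Φ : K → K, (x,t) ↦ (H x t, t)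
  have hmem : ∀ q : K, ((H q.1.1 q.1.2, q.1.2) : Euc d × ℝ) ∈ K := by
    rintro ⟨⟨x, t⟩, hx, ht⟩
    exact ⟨hmemB t ht x hx, ht⟩
  set Φ : K → K := fun q => ⟨(H q.1.1 q.1.2, q.1.2), hmem q⟩ with hΦ
  have hΦc : Continuous Φ := by
    apply Continuous.subtype_mk
    exact ((Hcont.restrict).prodMk (continuous_snd.comp continuous_subtype_val))
  have hbij : Function.Bijective Φ := by
    constructor
    · rintro ⟨⟨x, t⟩, hx, ht⟩ ⟨⟨x', t'⟩, hx', ht'⟩ h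
      obtain ⟨e, he⟩ := Hhomeo t ht
      have h1 : H x t = H x' t' := congrArg (fun q : K => q.1.1) h
      have h2 : t = t' := congrArg (fun q : K => q.1.2) h
      subst h2
      have : e ⟨x, hx⟩ = e ⟨x', hx'⟩ := by
        apply Subtype.ext; rw [he, he]; exact h1
      have := e.injective this
      apply Subtype.ext
      exact Prod.ext (congrArg Subtype.val this) rfl
    · rintro ⟨⟨y, t⟩, hy, ht⟩
      obtain ⟨e, he⟩ := Hhomeo t ht
      refine ⟨⟨(↑(e.symm ⟨y, hy⟩), t), (e.symm ⟨y, hy⟩).2, ht⟩, ?_⟩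
      apply Subtype.ext
      refine Prod.ext ?_ rfl
      show H (e.symm ⟨y, hy⟩ : B) t = y
      rw [← he (e.symm ⟨y, hy⟩)]
      simp
  set Ψ : K ≃ K := Equiv.ofBijective Φ hbij with hΨ
  have hΨc : Continuous Ψ := hΦc
  let E : K ≃ₜ K := hΨc.homeoOfEquivCompactToT2
  refine ⟨fun q => if h : q ∈ K then ((E.symm ⟨q, h⟩ : K) : Euc d × ℝ).1 else q.1, ?_, ?_⟩
  · rw [continuousOn_iff_continuous_restrict]
    have : K.domRestrict (fun q => if h : q ∈ K then ((E.symm ⟨q, h⟩ : K) : Euc d × ℝ).1 else q.1)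
        = fun q : K => ((E.symm q : K) : Euc d × ℝ).1 := by
      funext q; simp [Set.restrict, q.2]
    rw [this]
    exact continuous_fst.comp (continuous_subtype_val.comp E.symm.continuous)
  · intro q hq
    beta_reduce
    rw [dif_pos hq]
    have happ : Φ (E.symm ⟨q, hq⟩) = ⟨q, hq⟩ := Ψ.apply_symm_apply ⟨q, hq⟩
    have h1 : H ((E.symm ⟨q, hq⟩ : K) : Euc d × ℝ).1 ((E.symm ⟨q, hq⟩ : K) : Euc d × ℝ).2 = q.1 :=
      congrArg (fun r : K => r.1.1) happ
    have h2 : ((E.symm ⟨q, hq⟩ : K) : Euc d × ℝ).2 = q.2 := congrArg (fun r : K => r.1.2) happ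
    refine ⟨(E.symm ⟨q, hq⟩).2.1, ?_⟩
    rw [← h2]; exact h1

lemma key_tracking (d : ℕ) (ℓ : ℝ) (B : Set (Euc d)) (hB : IsCompact B)
    (g p θ : Euc d → ℝ) (hθ : ContinuousOn θ B)
    (hθ01 : ∀ x ∈ B, θ x ∈ Set.Icc (0:ℝ) 1)
    (H Hbar : Euc d → ℝ → Euc d)
    (Hcont : ContinuousOn (fun q : Euc d × ℝ => H q.1 q.2) (B ×ˢ Set.Icc 0 1))
    (Hbarcont : ContinuousOn (fun q : Euc d × ℝ => Hbar q.1 q.2) (B ×ˢ Set.Icc 0 1))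
    (Hhomeo : ∀ t ∈ Set.Icc (0:ℝ) 1, ∃ e : B ≃ₜ B, ∀ x : B, (e x : Euc d) = H x t)
    (Hid : ∀ x ∈ B, H x 0 = x) (Hbarid : ∀ x ∈ B, Hbar x 0 = x)
    (Hlevel : ∀ t ∈ Set.Icc (0:ℝ) 1,
      (fun x => H x t) '' ({x | g x = ℓ} ∩ B) = {x ∈ B | g x + t * p x = ℓ})
    (Hbarlevel : ∀ t ∈ Set.Icc (0:ℝ) 1,
      (fun x => Hbar x t) '' ({x | g x = ℓ} ∩ B) = {x ∈ B | g x + t * (θ x * p x) = ℓ})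
    (x : Euc d) (hx : x ∈ {x | g x = ℓ} ∩ B)
    (hagree1 : θ (Hbar x 1) * p (Hbar x 1) = p (Hbar x 1)) :
    ∃ w ∈ connectedComponentIn ({x | g x = ℓ} ∩ B) x, H w 1 = Hbar x 1 := by
  obtain ⟨F, Fcont, Fprop⟩ := exists_isotopy_inverse d B hB H Hcont Hhomeo
  set S₀ : Set (Euc d) := {x | g x = ℓ} ∩ B with hS₀
  have hxB : x ∈ B := hx.2
  have h01 : (0:ℝ) ∈ Set.Icc (0:ℝ) 1 := ⟨le_refl 0, zero_le_one⟩
  have h11 : (1:ℝ) ∈ Set.Icc (0:ℝ) 1 := ⟨zero_le_one, le_refl 1⟩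
  have Hinj : ∀ t ∈ Set.Icc (0:ℝ) 1, ∀ a ∈ B, ∀ b ∈ B, H a t = H b t → a = b := by
    intro t ht a ha b hb hab
    obtain ⟨e, he⟩ := Hhomeo t ht
    have : e ⟨a, ha⟩ = e ⟨b, hb⟩ := Subtype.ext (by rw [he, he]; exact hab)
    exact congrArg Subtype.val (e.injective this)
  -- F maps level sets at time s back into S₀
  have hFS : ∀ (y : Euc d) (s : ℝ), s ∈ Set.Icc (0:ℝ) 1 → y ∈ B → g y + s * p y = ℓ →
      F (y, s) ∈ S₀ ∧ H (F (y, s)) s = y := by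
    intro y s hsI hyB hy
    have h1 := Fprop (y, s) ⟨hyB, hsI⟩
    have h2 : y ∈ (fun z => H z s) '' S₀ := by rw [Hlevel s hsI]; exact ⟨hyB, hy⟩
    obtain ⟨w, hwS, hw⟩ := h2
    have hweq : w = F (y, s) := Hinj s hsI w hwS.2 (F (y, s)) h1.1 (hw.trans h1.2.symm)
    exact ⟨hweq ▸ hwS, h1.2⟩
  -- the curve c t = Hbar x t and its time reparametrization
  set c : ℝ → Euc d := fun t => Hbar x t with hc
  have hc_cont : ContinuousOn c (Set.Icc 0 1) := by
    have h : ContinuousOn (fun t : ℝ => ((x, t) : Euc d × ℝ)) (Set.Icc 0 1) :=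
      (continuous_const.prodMk continuous_id).continuousOn
    exact Hbarcont.comp h (fun t ht => ⟨hxB, ht⟩)
  have hcmem : ∀ t ∈ Set.Icc (0:ℝ) 1, c t ∈ B ∧ g (c t) + t * (θ (c t) * p (c t)) = ℓ := by
    intro t ht
    have h : c t ∈ (fun z => Hbar z t) '' S₀ := ⟨x, hx, rfl⟩
    rw [Hbarlevel t ht] at h
    exact h
  have hsI : ∀ t ∈ Set.Icc (0:ℝ) 1, t * θ (c t) ∈ Set.Icc (0:ℝ) 1 := by
    intro t ht
    have hθt := hθ01 (c t) (hcmem t ht).1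
    constructor
    · exact mul_nonneg ht.1 hθt.1
    · calc t * θ (c t) ≤ 1 * 1 := mul_le_mul ht.2 hθt.2 hθt.1 zero_le_one
        _ = 1 := mul_one 1
  have hlev : ∀ t ∈ Set.Icc (0:ℝ) 1, g (c t) + (t * θ (c t)) * p (c t) = ℓ := by
    intro t ht
    have := (hcmem t ht).2
    linarith [mul_assoc t (θ (c t)) (p (c t))]
  -- the pulled-back path u
  set u : ℝ → Euc d := fun t => F (c t, t * θ (c t)) with hu
  have hu_cont : ContinuousOn u (Set.Icc 0 1) := by
    have hθc : ContinuousOn (fun t => θ (c t)) (Set.Icc 0 1) :=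
      hθ.comp hc_cont (fun t ht => (hcmem t ht).1)
    have hinner : ContinuousOn (fun t : ℝ => ((c t, t * θ (c t)) : Euc d × ℝ)) (Set.Icc 0 1) :=
      hc_cont.prodMk (continuousOn_id.mul hθc)
    exact Fcont.comp hinner (fun t ht => ⟨(hcmem t ht).1, hsI t ht⟩)
  have huS : ∀ t ∈ Set.Icc (0:ℝ) 1, u t ∈ S₀ :=
    fun t ht => (hFS (c t) (t * θ (c t)) (hsI t ht) (hcmem t ht).1 (hlev t ht)).1
  have hu0 : u 0 = x := by
    have hc0 : c 0 = x := Hbarid x hxB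
    have hx0 : g x + 0 * p x = ℓ := by rw [zero_mul, add_zero]; exact hx.1
    have h := hFS x 0 h01 hxB hx0
    have hFx : F (x, 0) = x := by
      have := Hid (F (x, 0)) (Fprop (x, 0) ⟨hxB, h01⟩).1
      rw [← this]; exact h.2
    show F (c 0, 0 * θ (c 0)) = x
    rw [hc0, zero_mul, hFx]
  have hu1 : u 1 ∈ connectedComponentIn S₀ x := by
    have himg : IsPreconnected (u '' Set.Icc 0 1) := isPreconnected_Icc.image u hu_cont
    have hsub : u '' Set.Icc 0 1 ⊆ S₀ := by
      rintro _ ⟨t, ht, rfl⟩; exact huS t ht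
    have hxmem : x ∈ u '' Set.Icc 0 1 := ⟨0, h01, hu0⟩
    exact (himg.subset_connectedComponentIn hxmem hsub) ⟨1, h11, rfl⟩
  -- endgame
  have hyB : c 1 ∈ B := (hcmem 1 h11).1
  have hcase : p (c 1) = 0 ∨ θ (c 1) = 1 := by
    have h : (θ (c 1) - 1) * p (c 1) = 0 := by
      rw [sub_mul, one_mul, hagree1]; ring
    rcases mul_eq_zero.mp h with h | h
    · right; linarith
    · left; exact h
  rcases hcase with hp0 | hθ1
  · -- p = 0 at the endpoint: second pullback path
    have hgy : g (c 1) = ℓ := by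
      have := (hcmem 1 h11).2; rw [hp0] at this; linarith
    have hylev : ∀ r ∈ Set.Icc (0:ℝ) 1, g (c 1) + r * p (c 1) = ℓ := by
      intro r hr; rw [hp0, mul_zero, add_zero]; exact hgy
    set v : ℝ → Euc d := fun r => F (c 1, r) with hv
    have hv_cont : ContinuousOn v (Set.Icc 0 1) := by
      have hinner : ContinuousOn (fun r : ℝ => ((c 1, r) : Euc d × ℝ)) (Set.Icc 0 1) :=
        (continuous_const.prodMk continuous_id).continuousOn
      exact Fcont.comp hinner (fun r hr => ⟨hyB, hr⟩)
    have hvS : ∀ r ∈ Set.Icc (0:ℝ) 1, v r ∈ S₀ :=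
      fun r hr => (hFS (c 1) r hr hyB (hylev r hr)).1
    have hvmid : v (1 * θ (c 1)) = u 1 := rfl
    have hsub : v '' Set.Icc 0 1 ⊆ S₀ := by
      rintro _ ⟨r, hr, rfl⟩; exact hvS r hr
    have himg : IsPreconnected (v '' Set.Icc 0 1) := isPreconnected_Icc.image v hv_cont
    have hmem : u 1 ∈ v '' Set.Icc 0 1 := ⟨1 * θ (c 1), hsI 1 h11, hvmid⟩
    have hvcc : v '' Set.Icc 0 1 ⊆ connectedComponentIn S₀ (u 1) :=
      himg.subset_connectedComponentIn hmem hsub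
    have hcc : connectedComponentIn S₀ (u 1) = connectedComponentIn S₀ x :=
      (connectedComponentIn_eq hu1).symm
    refine ⟨v 1, ?_, ?_⟩
    · rw [← hcc]; exact hvcc ⟨1, h11, rfl⟩
    · exact (hFS (c 1) 1 h11 hyB (hylev 1 h11)).2
  · -- θ = 1 at the endpoint
    refine ⟨u 1, hu1, ?_⟩
    have h := (hFS (c 1) (1 * θ (c 1)) (hsI 1 h11) hyB (hlev 1 h11)).2
    rw [hθ1, mul_one] at h
    show H (F (c 1, 1 * θ (c 1))) 1 = Hbar x 1
    rw [hθ1, mul_one]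
    exact h

/-- If `p̄ = θ·p` agrees with `p` off a set `N`, and `H`, `H̄` are isotopies
of the compact set `B` carrying `{g = ℓ} ∩ B` onto `{g + tp = ℓ} ∩ B` and onto
`{g + tp̄ = ℓ} ∩ B` respectively, then for every connected component `L` of `{g = ℓ} ∩ B`
the time-one images agree off `N`. -/
theorem statement_9 (d : ℕ) (hd : 1 ≤ d) (ℓ : ℝ)
    (B : Set (Euc d)) (hB : IsCompact B)
    (g p θ : Euc d → ℝ)
    (hg : ContinuousOn g B) (hp : ContinuousOn p B) (hθ : ContinuousOn θ B)
    (hθ01 : ∀ x ∈ B, θ x ∈ Set.Icc (0:ℝ) 1)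
    (N : Set (Euc d)) (hN : N ⊆ B)
    (hagree : ∀ x ∈ B \ N, θ x * p x = p x)
    (hfin : FinitelyManyComponents d ({x | g x = ℓ} ∩ B))
    (H Hbar : Euc d → ℝ → Euc d)
    (Hcont : ContinuousOn (fun q : Euc d × ℝ => H q.1 q.2) (B ×ˢ Set.Icc 0 1))
    (Hbarcont : ContinuousOn (fun q : Euc d × ℝ => Hbar q.1 q.2) (B ×ˢ Set.Icc 0 1))
    (Hhomeo : ∀ t ∈ Set.Icc (0:ℝ) 1, ∃ e : B ≃ₜ B, ∀ x : B, (e x : Euc d) = H x t)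
    (Hbarhomeo : ∀ t ∈ Set.Icc (0:ℝ) 1, ∃ e : B ≃ₜ B, ∀ x : B, (e x : Euc d) = Hbar x t)
    (Hid : ∀ x ∈ B, H x 0 = x) (Hbarid : ∀ x ∈ B, Hbar x 0 = x)
    (Hlevel : ∀ t ∈ Set.Icc (0:ℝ) 1,
      (fun x => H x t) '' ({x | g x = ℓ} ∩ B) = {x ∈ B | g x + t * p x = ℓ})
    (Hbarlevel : ∀ t ∈ Set.Icc (0:ℝ) 1,
      (fun x => Hbar x t) '' ({x | g x = ℓ} ∩ B) = {x ∈ B | g x + t * (θ x * p x) = ℓ})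
    (L : Set (Euc d))
    (hL : ∃ x ∈ {x | g x = ℓ} ∩ B, L = connectedComponentIn ({x | g x = ℓ} ∩ B) x) :
    ((fun x => Hbar x 1) '' L) \ N = ((fun x => H x 1) '' L) \ N := by
  obtain ⟨x₀, hx₀, rfl⟩ := hL
  set S₀ : Set (Euc d) := {x | g x = ℓ} ∩ B with hS₀
  have h11 : (1:ℝ) ∈ Set.Icc (0:ℝ) 1 := ⟨zero_le_one, le_refl 1⟩
  have hLsub : connectedComponentIn S₀ x₀ ⊆ S₀ := connectedComponentIn_subset _ _
  have Hinj : ∀ a ∈ B, ∀ b ∈ B, H a 1 = H b 1 → a = b := by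
    intro a ha b hb hab
    obtain ⟨e, he⟩ := Hhomeo 1 h11
    have : e ⟨a, ha⟩ = e ⟨b, hb⟩ := Subtype.ext (by rw [he, he]; exact hab)
    exact congrArg Subtype.val (e.injective this)
  ext y
  simp only [Set.mem_diff, Set.mem_image]
  constructor
  · rintro ⟨⟨x, hxL, rfl⟩, hyN⟩
    have hxS : x ∈ S₀ := hLsub hxL
    have hyB : Hbar x 1 ∈ B := by
      have h : Hbar x 1 ∈ (fun z => Hbar z 1) '' S₀ := ⟨x, hxS, rfl⟩
      rw [Hbarlevel 1 h11] at h
      exact h.1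
    have ha := hagree (Hbar x 1) ⟨hyB, hyN⟩
    obtain ⟨w, hwC, hw⟩ := key_tracking d ℓ B hB g p θ hθ hθ01 H Hbar Hcont Hbarcont
      Hhomeo Hid Hbarid Hlevel Hbarlevel x hxS ha
    have hcc : connectedComponentIn S₀ x₀ = connectedComponentIn S₀ x :=
      connectedComponentIn_eq hxL
    exact ⟨⟨w, hcc ▸ hwC, hw⟩, hyN⟩
  · rintro ⟨⟨x, hxL, rfl⟩, hyN⟩
    have hxS : x ∈ S₀ := hLsub hxL
    have hy : H x 1 ∈ B ∧ g (H x 1) + 1 * p (H x 1) = ℓ := by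
      have h : H x 1 ∈ (fun z => H z 1) '' S₀ := ⟨x, hxS, rfl⟩
      rw [Hlevel 1 h11] at h
      exact h
    have ha := hagree (H x 1) ⟨hy.1, hyN⟩
    have hyS : H x 1 ∈ (fun z => Hbar z 1) '' S₀ := by
      rw [Hbarlevel 1 h11]
      refine ⟨hy.1, ?_⟩
      rw [ha]; exact hy.2
    obtain ⟨x', hx'S, hx'⟩ := hyS
    have hx'e : Hbar x' 1 = H x 1 := hx'
    obtain ⟨w, hwC, hw⟩ := key_tracking d ℓ B hB g p θ hθ hθ01 H Hbar Hcont Hbarcont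
      Hhomeo Hid Hbarid Hlevel Hbarlevel x' hx'S (by rw [hx'e]; exact ha)
    have hwB : w ∈ B := ((connectedComponentIn_subset S₀ x' hwC) : w ∈ S₀).2
    have hwx : w = x := Hinj w hwB x hxS.2 (hw.trans hx'e)
    have hxC : x ∈ connectedComponentIn S₀ x' := hwx ▸ hwC
    have hcc1 : connectedComponentIn S₀ x' = connectedComponentIn S₀ x :=
      connectedComponentIn_eq hxC
    have hcc2 : connectedComponentIn S₀ x₀ = connectedComponentIn S₀ x :=
      connectedComponentIn_eq hxL
    have hx'L : x' ∈ connectedComponentIn S₀ x₀ := by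
      rw [hcc2, ← hcc1]
      exact mem_connectedComponentIn hx'S
    exact ⟨⟨x', hx'L, hx'e⟩, hyN⟩


end
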